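/- Let d ≥ 1 and let X : [0,1] → ℝ^d be a continuously differentiable path. Then the set A of real-valued functions on continuously differentiable paths of the form X ↦ Σ_I w_I S^{(I)}(X), where the sum runs over finitely many multi-indices I with entries in {1,…,d} (including the empty multi-index) and w_I ∈ ℝ, is closed under pointwise multiplication: if f(X) = Σ_I v_I S^{(I)}(X) and g(X) = Σ_J w_J S^{(J)}(X) are two such finite linear combinations, then the pointwise product X ↦ f(X)·g(X) is again a finite linear combination of iterated integrals, namely f(X)g(X) = Σ_{I,J} v_I w_J Σ_{A} S^{(w_A)}(X), where for each pair (I,J) with |I| = p, |J| = q the inner sum runs over subsets A ⊆ {1,…,p+q} with |A| = p and w_A denotes the interleaving of I and J determined by A. -/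

import Mathlib

open MeasureTheory

/-- The open ordered simplex `{ t : Fin n → ℝ | a < t 0 < t 1 < ⋯ < t (n-1) < b }`. -/
def orderedSimplex (a b : ℝ) (n : ℕ) : Set (Fin n → ℝ) :=
  {t | (∀ i, a < t i ∧ t i < b) ∧ ∀ i j : Fin n, i < j → t i < t j}

/-- The iterated integral `S^{(i₁⋯iₙ)}_{[a,b]}(X)` of a path `X : ℝ → ℝ^d`.
For `n = 0` this is automatically `1`. -/
noncomputable def sig {d : ℕ} (X : ℝ → Fin d → ℝ) (a b : ℝ) {n : ℕ}
    (idx : Fin n → Fin d) : ℝ :=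
  ∫ t in orderedSimplex a b n, ∏ i, deriv (fun u => X u (idx i)) (t i)

/-- The interleaving `w_A` of the multi-indices `I` (length `p`) and `J` (length `q`)
determined by a subset `A ⊆ {1,…,p+q}` of cardinality `p`: the entries at the
positions of `A`, read in increasing order, are those of `I`, and the entries at the
positions of the complement of `A`, read in increasing order, are those of `J`. -/
def interleave {d p q : ℕ} (I : Fin p → Fin d) (J : Fin q → Fin d)
    (A : Finset (Fin (p + q))) (hA : A.card = p) : Fin (p + q) → Fin d :=
  fun m =>
    if hm : m ∈ A then
      I ⟨(A.filter (fun x => x < m)).card, by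
        have h2 : (A.filter (fun x => x < m)).card < A.card :=
          Finset.card_lt_card ⟨Finset.filter_subset _ _,
            fun hsub => by simpa using hsub hm⟩
        omega⟩
    else
      J ⟨(Aᶜ.filter (fun x => x < m)).card, by
        have hAc : Aᶜ.card = q := by
          have h1 := Finset.card_compl A
          simp only [Fintype.card_fin, hA] at h1
          omega
        have h2 : (Aᶜ.filter (fun x => x < m)).card < Aᶜ.card :=
          Finset.card_lt_card ⟨Finset.filter_subset _ _,
            fun hsub => by simpa using hsub (Finset.mem_compl.mpr hm)⟩
        omega⟩

/-- The iterated integral over `[0,1]` indexed by a multi-index given as a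
list (word) over `{1,…,d}`. -/
noncomputable def sigL {d : ℕ} (X : ℝ → Fin d → ℝ) (I : List (Fin d)) : ℝ :=
  sig X 0 1 I.get

open Finset

variable {p q : ℕ}

lemma rank_lt_card {n : ℕ} {s : Finset (Fin n)} {m : Fin n} (hm : m ∈ s) :
    (s.filter (fun x => x < m)).card < s.card :=
  Finset.card_lt_card ⟨Finset.filter_subset _ _,
    fun hsub => by simpa using hsub hm⟩

lemma compl_card {A : Finset (Fin (p + q))} (hA : A.card = p) : Aᶜ.card = q := by
  have h1 := Finset.card_compl A
  simp only [Fintype.card_fin, hA] at h1; omega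

/-- The merge bijection determined by `A`. -/
def sigmaA (A : Finset (Fin (p + q))) (hA : A.card = p) (m : Fin (p + q)) : Fin (p + q) :=
  if hm : m ∈ A then
    Fin.castAdd q ⟨(A.filter (fun x => x < m)).card,
      by have := rank_lt_card hm; omega⟩
  else
    Fin.natAdd p ⟨(Aᶜ.filter (fun x => x < m)).card,
      by have := rank_lt_card (Finset.mem_compl.mpr hm); have := compl_card hA; omega⟩

lemma sigmaA_val_lt_iff {A : Finset (Fin (p + q))} (hA : A.card = p) (m : Fin (p + q)) :
    (sigmaA A hA m).val < p ↔ m ∈ A := by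
  by_cases hm : m ∈ A <;> simp only [sigmaA, dif_pos, dif_neg, hm, Fin.coe_castAdd, Fin.coe_natAdd]
  · rw [iff_true]; have := rank_lt_card hm; omega
  · simp

lemma rank_lt_rank {n : ℕ} {s : Finset (Fin n)} {m m' : Fin n} (hm : m ∈ s) (h : m < m') :
    (s.filter (fun x => x < m)).card < (s.filter (fun x => x < m')).card := by
  apply Finset.card_lt_card
  constructor
  · intro x hx
    simp only [Finset.mem_filter] at hx ⊢
    exact ⟨hx.1, lt_trans hx.2 h⟩
  · intro hsub
    have : m ∈ s.filter (fun x => x < m') := Finset.mem_filter.mpr ⟨hm, h⟩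
    have := hsub this
    simp at this

lemma sigmaA_strictMono_mem {A : Finset (Fin (p + q))} (hA : A.card = p) {m m' : Fin (p + q)}
    (hm : m ∈ A) (hm' : m' ∈ A) (h : m < m') : sigmaA A hA m < sigmaA A hA m' := by
  simp only [sigmaA, dif_pos hm, dif_pos hm']
  rw [Fin.lt_def]
  simpa using rank_lt_rank hm h

lemma sigmaA_strictMono_compl {A : Finset (Fin (p + q))} (hA : A.card = p) {m m' : Fin (p + q)}
    (hm : m ∉ A) (hm' : m' ∉ A) (h : m < m') : sigmaA A hA m < sigmaA A hA m' := by
  simp only [sigmaA, dif_neg hm, dif_neg hm']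
  rw [Fin.lt_def]
  simpa using rank_lt_rank (Finset.mem_compl.mpr hm) h

lemma sigmaA_injective {A : Finset (Fin (p + q))} (hA : A.card = p) :
    Function.Injective (sigmaA A hA) := by
  intro m m' hmm
  by_contra hne
  rcases lt_or_gt_of_ne hne with h | h
  · by_cases hm : m ∈ A <;> by_cases hm' : m' ∈ A
    · exact absurd hmm (ne_of_lt (sigmaA_strictMono_mem hA hm hm' h))
    · have h1 : (sigmaA A hA m).val < p := (sigmaA_val_lt_iff hA m).mpr hm
      have h2 : ¬ (sigmaA A hA m').val < p := fun hc => hm' ((sigmaA_val_lt_iff hA m').mp hc)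
      rw [hmm] at h1; exact h2 h1
    · have h1 : (sigmaA A hA m').val < p := (sigmaA_val_lt_iff hA m').mpr hm'
      have h2 : ¬ (sigmaA A hA m).val < p := fun hc => hm ((sigmaA_val_lt_iff hA m).mp hc)
      rw [hmm] at h2; exact h2 h1
    · exact absurd hmm (ne_of_lt (sigmaA_strictMono_compl hA hm hm' h))
  · by_cases hm : m ∈ A <;> by_cases hm' : m' ∈ A
    · exact absurd hmm.symm (ne_of_lt (sigmaA_strictMono_mem hA hm' hm h))
    · have h1 : (sigmaA A hA m).val < p := (sigmaA_val_lt_iff hA m).mpr hm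
      have h2 : ¬ (sigmaA A hA m').val < p := fun hc => hm' ((sigmaA_val_lt_iff hA m').mp hc)
      rw [hmm] at h1; exact h2 h1
    · have h1 : (sigmaA A hA m').val < p := (sigmaA_val_lt_iff hA m').mpr hm'
      have h2 : ¬ (sigmaA A hA m).val < p := fun hc => hm ((sigmaA_val_lt_iff hA m).mp hc)
      rw [hmm] at h2; exact h2 h1
    · exact absurd hmm.symm (ne_of_lt (sigmaA_strictMono_compl hA hm' hm h))

lemma sigmaA_bijective {A : Finset (Fin (p + q))} (hA : A.card = p) :
    Function.Bijective (sigmaA A hA) :=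
  Finite.injective_iff_bijective.mp (sigmaA_injective hA)

/-- σ determined by A: injective in A. -/
lemma sigmaA_eq_iff {A B : Finset (Fin (p + q))} (hA : A.card = p) (hB : B.card = p)
    (h : sigmaA A hA = sigmaA B hB) : A = B := by
  ext m
  rw [← sigmaA_val_lt_iff hA m, ← sigmaA_val_lt_iff hB m, h]
lemma card_filter_val_lt (p q : ℕ) :
    ((univ : Finset (Fin (p + q))).filter (fun k => k.val < p)).card = p := by
  have h : ((univ : Finset (Fin (p + q))).filter (fun k => k.val < p)).card
      = (univ : Finset (Fin p)).card := by
    apply Finset.card_bij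
      (fun (k : Fin (p + q)) hk => (⟨k.val, (Finset.mem_filter.mp hk).2⟩ : Fin p))
    · intro a ha; exact Finset.mem_univ _
    · intro a ha b hb hab
      exact Fin.ext (by simpa [Fin.ext_iff] using hab)
    · intro b _
      exact ⟨⟨(b : ℕ), by omega⟩, Finset.mem_filter.mpr ⟨Finset.mem_univ _, b.isLt⟩, rfl⟩
  simpa using h

lemma card_filter_lt_fin {n : ℕ} (c : Fin n) :
    ((univ : Finset (Fin n)).filter (fun y => y < c)).card = (c : ℕ) := by
  have : (univ : Finset (Fin n)).filter (fun y => y < c) = Finset.Iio c := by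
    ext y; simp [Finset.mem_Iio]
  rw [this, Fin.card_Iio]

lemma sigmaA_eq_perm {A : Finset (Fin (p + q))} (hA : A.card = p) (π : Equiv.Perm (Fin (p + q)))
    (hmem : ∀ m, ((π m : Fin (p + q)) : ℕ) < p ↔ m ∈ A)
    (hmono : ∀ m m' : Fin (p + q), m < m' → (m ∈ A ↔ m' ∈ A) → π m < π m') :
    ∀ m, sigmaA A hA m = π m := by
  intro m
  by_cases hm : m ∈ A
  · have hπm : ((π m : Fin (p + q)) : ℕ) < p := (hmem m).mpr hm
    have hcount : (A.filter (fun x => x < m)).card = ((π m : Fin (p + q)) : ℕ) := by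
      have h1 : (A.filter (fun x => x < m)).card
          = ((univ : Finset (Fin (p + q))).filter (fun y => y < π m)).card := by
        apply Finset.card_bij (fun x _ => π x)
        · intro x hx
          rcases Finset.mem_filter.mp hx with ⟨hxA, hxm⟩
          exact Finset.mem_filter.mpr ⟨Finset.mem_univ _, hmono x m hxm (by tauto)⟩
        · intro a _ b _ hab; exact π.injective hab
        · intro y hy
          have hyπ : y < π m := (Finset.mem_filter.mp hy).2
          refine ⟨π.symm y, ?_, by simp⟩
          have hyA : π.symm y ∈ A := by
            apply (hmem (π.symm y)).mp
            simp only [Equiv.apply_symm_apply]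
            have : (y : ℕ) < ((π m : Fin (p + q)) : ℕ) := hyπ
            omega
          have hlt : π.symm y < m := by
            rcases lt_trichotomy (π.symm y) m with h | h | h
            · exact h
            · exfalso
              rw [← h, Equiv.apply_symm_apply] at hyπ
              exact lt_irrefl _ hyπ
            · exfalso
              have := hmono m (π.symm y) h (by tauto)
              simp only [Equiv.apply_symm_apply] at this
              exact absurd hyπ (not_lt.mpr this.le)
          exact Finset.mem_filter.mpr ⟨hyA, hlt⟩
      rw [h1, card_filter_lt_fin]
    simp only [sigmaA, dif_pos hm]
    apply Fin.ext
    simpa using hcount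
  · have hπm : p ≤ ((π m : Fin (p + q)) : ℕ) :=
      not_lt.mp (fun h => hm ((hmem m).mp h))
    have htotal : ((univ : Finset (Fin (p + q))).filter (fun y => y < π m)).card
        = ((π m : Fin (p + q)) : ℕ) := card_filter_lt_fin _
    set s := (univ : Finset (Fin (p + q))).filter (fun y => y < π m) with hs
    have hsplit := Finset.card_filter_add_card_filter_not
      (s := s) (p := fun y => y.val < p)
    have hC : s.filter (fun y => y.val < p)
        = (univ : Finset (Fin (p + q))).filter (fun k => k.val < p) := by
      ext y
      simp only [hs, Finset.mem_filter, Finset.mem_univ, true_and, Finset.filter_filter]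
      constructor
      · rintro ⟨_, h2⟩; exact h2
      · intro h
        refine ⟨?_, h⟩
        rw [Fin.lt_def]; omega
    have hCc : (s.filter (fun y => ¬ y.val < p)).card
        = (Aᶜ.filter (fun x => x < m)).card := by
      symm
      apply Finset.card_bij (fun x _ => π x)
      · intro x hx
        rcases Finset.mem_filter.mp hx with ⟨hxA, hxm⟩
        have hxA' : x ∉ A := Finset.mem_compl.mp hxA
        have h1 : π x < π m := hmono x m hxm (by tauto)
        have h2 : ¬ ((π x : Fin (p + q)) : ℕ) < p := fun hc => hxA' ((hmem x).mp hc)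
        simp only [hs, Finset.mem_filter, Finset.mem_univ, true_and, Finset.filter_filter]
        exact ⟨h1, h2⟩
      · intro a _ b _ hab; exact π.injective hab
      · intro y hy
        simp only [hs, Finset.mem_filter, Finset.mem_univ, true_and, Finset.filter_filter] at hy
        rcases hy with ⟨hyπ, hyp⟩
        refine ⟨π.symm y, ?_, by simp⟩
        have hyA : π.symm y ∉ A := by
          intro hc
          have := (hmem (π.symm y)).mpr hc
          simp only [Equiv.apply_symm_apply] at this
          exact hyp this
        have hlt : π.symm y < m := by
          rcases lt_trichotomy (π.symm y) m with h | h | h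
          · exact h
          · exfalso
            rw [← h, Equiv.apply_symm_apply] at hyπ
            exact lt_irrefl _ hyπ
          · exfalso
            have := hmono m (π.symm y) h (by tauto)
            simp only [Equiv.apply_symm_apply] at this
            exact absurd hyπ (not_lt.mpr this.le)
        exact Finset.mem_filter.mpr ⟨Finset.mem_compl.mpr hyA, hlt⟩
    have hCcard : (s.filter (fun y => y.val < p)).card = p := by
      rw [hC, card_filter_val_lt p q]
    simp only [sigmaA, dif_neg hm]
    apply Fin.ext
    simp only [Fin.coe_natAdd]
    omega

/-- Existence: a block-increasing injective tuple lies in some piece. -/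
lemma exists_sigmaA {x : Fin (p + q) → ℝ} (hinj : Function.Injective x)
    (hC : ∀ k k' : Fin (p + q), (k : ℕ) < p → (k' : ℕ) < p → k < k' → x k < x k')
    (hCc : ∀ k k' : Fin (p + q), p ≤ (k : ℕ) → p ≤ (k' : ℕ) → k < k' → x k < x k') :
    ∃ (A : Finset (Fin (p + q))) (hA : A.card = p),
      StrictMono (fun m => x (sigmaA A hA m)) := by
  set π := Tuple.sort x with hπ
  have hsm : StrictMono (x ∘ π) :=
    (Tuple.monotone_sort x).strictMono_of_injective (hinj.comp π.injective)
  set A := (univ : Finset (Fin (p + q))).filter (fun m => (π m).val < p)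
    with hAdef
  have hmem : ∀ m, ((π m : Fin (p + q)) : ℕ) < p ↔ m ∈ A := by
    intro m; simp [hAdef]
  have hA : A.card = p := by
    have h1 : A.card = ((univ : Finset (Fin (p + q))).filter (fun k => k.val < p)).card := by
      apply Finset.card_bij (fun m _ => π m)
      · intro m hm
        exact Finset.mem_filter.mpr ⟨Finset.mem_univ _, (Finset.mem_filter.mp hm).2⟩
      · intro a _ b _ hab; exact π.injective hab
      · intro y hy
        refine ⟨π.symm y, ?_, by simp⟩
        apply (hmem _).mp
        simp only [Equiv.apply_symm_apply]
        exact (Finset.mem_filter.mp hy).2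
    rw [h1, card_filter_val_lt p q]
  have hmono : ∀ m m' : Fin (p + q), m < m' → (m ∈ A ↔ m' ∈ A) → π m < π m' := by
    intro m m' hmm hiff
    have hx : x (π m) < x (π m') := hsm hmm
    rcases lt_trichotomy (π m) (π m') with h | h | h
    · exact h
    · exfalso; rw [h] at hx; exact lt_irrefl _ hx
    · exfalso
      by_cases hm : m ∈ A
      · have hm' : m' ∈ A := hiff.mp hm
        have := hC (π m') (π m) ((hmem m').mpr hm') ((hmem m).mpr hm) h
        exact absurd hx (not_lt.mpr this.le)
      · have hm' : m' ∉ A := fun hc => hm (hiff.mpr hc)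
        have := hCc (π m') (π m)
          (not_lt.mp (fun hc => hm' ((hmem m').mp hc)))
          (not_lt.mp (fun hc => hm ((hmem m).mp hc))) h
        exact absurd hx (not_lt.mpr this.le)
  refine ⟨A, hA, ?_⟩
  have heq : ∀ m, sigmaA A hA m = π m := sigmaA_eq_perm hA π (fun m => (hmem m)) hmono
  have : (fun m => x (sigmaA A hA m)) = x ∘ π := by
    funext m; rw [heq m]; rfl
  rw [this]; exact hsm

/-- Two strictly monotone tuples with the same range are equal. -/
lemma strictMono_unique {n : ℕ} {f g : Fin n → ℝ} (hf : StrictMono f) (hg : StrictMono g)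
    (h : Set.range f = Set.range g) : f = g := by
  set s := (univ : Finset (Fin n)).image f with hsdef
  have hcard : s.card = n := by
    rw [hsdef, Finset.card_image_of_injective _ hf.injective, Finset.card_univ,
      Fintype.card_fin]
  have hf' : f = s.orderEmbOfFin hcard := by
    apply Finset.orderEmbOfFin_unique hcard ?_ hf
    intro x; exact Finset.mem_image_of_mem f (Finset.mem_univ x)
  have hg' : g = s.orderEmbOfFin hcard := by
    apply Finset.orderEmbOfFin_unique hcard ?_ hg
    intro x
    have : g x ∈ Set.range f := h ▸ Set.mem_range_self x
    rcases this with ⟨y, hy⟩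
    rw [← hy]; exact Finset.mem_image_of_mem f (Finset.mem_univ y)
  rw [hf', hg']
lemma isOpen_orderedSimplex (a b : ℝ) (n : ℕ) : IsOpen (orderedSimplex a b n) := by
  have h : orderedSimplex a b n =
      (⋂ i : Fin n, ({t : Fin n → ℝ | a < t i} ∩ {t : Fin n → ℝ | t i < b})) ∩
      ⋂ i : Fin n, ⋂ j : Fin n, ⋂ _ : i < j, {t : Fin n → ℝ | t i < t j} := by
    ext t
    constructor
    · rintro ⟨h1, h2⟩
      refine ⟨Set.mem_iInter.mpr fun i => ⟨(h1 i).1, (h1 i).2⟩, ?_⟩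
      exact Set.mem_iInter.mpr fun i => Set.mem_iInter.mpr fun j =>
        Set.mem_iInter.mpr fun hij => h2 i j hij
    · rintro ⟨h1, h2⟩
      refine ⟨fun i => ?_, fun i j hij => ?_⟩
      · exact Set.mem_iInter.mp h1 i
      · exact Set.mem_iInter.mp (Set.mem_iInter.mp (Set.mem_iInter.mp h2 i) j) hij
  rw [h]
  apply IsOpen.inter
  · apply isOpen_iInter_of_finite
    intro i
    exact (isOpen_lt continuous_const (continuous_apply i)).inter
      (isOpen_lt (continuous_apply i) continuous_const)
  · apply isOpen_iInter_of_finite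
    intro i
    apply isOpen_iInter_of_finite
    intro j
    apply isOpen_iInter_of_finite
    intro _
    exact isOpen_lt (continuous_apply i) (continuous_apply j)

lemma volume_nonInjective_null (n : ℕ) :
    (volume : Measure (Fin n → ℝ)) {x : Fin n → ℝ | ¬ Function.Injective x} = 0 := by
  have hsub : {x : Fin n → ℝ | ¬ Function.Injective x} ⊆
      ⋃ (k : Fin n), ⋃ (k' : Fin n), ⋃ (_ : k ≠ k'), {x : Fin n → ℝ | x k = x k'} := by
    intro x hx
    simp only [Set.mem_setOf_eq, Function.Injective, not_forall] at hx
    obtain ⟨k, k', hkk', hne⟩ := hx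
    exact Set.mem_iUnion.mpr ⟨k, Set.mem_iUnion.mpr ⟨k', Set.mem_iUnion.mpr ⟨hne, hkk'⟩⟩⟩
  refine measure_mono_null hsub ?_
  refine measure_iUnion_null fun k => measure_iUnion_null fun k' =>
    measure_iUnion_null fun hkk' => ?_
  have heq : {x : Fin n → ℝ | x k = x k'} =
      (LinearMap.ker ((LinearMap.proj k : (Fin n → ℝ) →ₗ[ℝ] ℝ) - LinearMap.proj k') : Set _) := by
    ext x
    simp [LinearMap.mem_ker, sub_eq_zero]
  rw [heq]
  apply Measure.addHaar_submodule
  intro hc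
  have h1 : Pi.single k (1 : ℝ) ∈ LinearMap.ker
      ((LinearMap.proj k : (Fin n → ℝ) →ₗ[ℝ] ℝ) - LinearMap.proj k') := by
    rw [hc]; trivial
  simp only [LinearMap.mem_ker, LinearMap.sub_apply, LinearMap.proj_apply] at h1
  rw [Pi.single_eq_same, Pi.single_eq_of_ne (Ne.symm hkk')] at h1
  norm_num at h1

theorem key_shuffle (p q : ℕ) (f : Fin (p + q) → ℝ → ℝ) (hf : ∀ k, Continuous (f k)) :
    (∫ s in orderedSimplex 0 1 p, ∏ i, f (Fin.castAdd q i) (s i)) *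
    (∫ t in orderedSimplex 0 1 q, ∏ j, f (Fin.natAdd p j) (t j)) =
    ∑ A : {A : Finset (Fin (p + q)) // A.card = p},
      ∫ u in orderedSimplex 0 1 (p + q), ∏ m, f (sigmaA A.1 A.2 m) (u m) := by
  classical
  -- the measurable equivalence between `Fin (p+q) → ℝ` and the product
  set e2 : ((Fin p ⊕ Fin q) → ℝ) ≃ᵐ (Fin (p + q) → ℝ) :=
    MeasurableEquiv.piCongrLeft (fun _ => ℝ) finSumFinEquiv with he2
  set e1 : ((Fin p ⊕ Fin q) → ℝ) ≃ᵐ ((Fin p → ℝ) × (Fin q → ℝ)) :=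
    MeasurableEquiv.sumPiEquivProdPi (fun _ => ℝ) with he1
  set E : (Fin (p + q) → ℝ) ≃ᵐ ((Fin p → ℝ) × (Fin q → ℝ)) := e2.symm.trans e1 with hE
  have hE1 : MeasurePreserving e1 volume volume := by
    have h := volume_measurePreserving_sumPiEquivProdPi_symm (fun _ : Fin p ⊕ Fin q => ℝ)
    have := h.symm e1.symm
    simpa using this
  have hE2 : MeasurePreserving e2.symm volume volume :=
    (volume_measurePreserving_piCongrLeft (fun _ => ℝ) finSumFinEquiv).symm e2
  have hEmp : MeasurePreserving E volume volume := hE1.comp hE2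
  have hEapp : ∀ x : Fin (p + q) → ℝ,
      E x = (fun i => x (Fin.castAdd q i), fun j => x (Fin.natAdd p j)) := by
    intro x
    have h2 : e2.symm x = fun ij => x (finSumFinEquiv ij) := rfl
    have : E x = e1 (fun ij => x (finSumFinEquiv ij)) := by rw [hE]; rfl
    rw [this]
    apply Prod.ext
    · funext i
      simp [he1, MeasurableEquiv.coe_sumPiEquivProdPi, Equiv.sumPiEquivProdPi]
    · funext j
      simp [he1, MeasurableEquiv.coe_sumPiEquivProdPi, Equiv.sumPiEquivProdPi]
  set G : (Fin (p + q) → ℝ) → ℝ := fun x => ∏ m, f m (x m) with hG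
  have hGsplit : ∀ x : Fin (p + q) → ℝ,
      G x = (∏ i, f (Fin.castAdd q i) (x (Fin.castAdd q i))) *
        (∏ j, f (Fin.natAdd p j) (x (Fin.natAdd p j))) := by
    intro x
    show (∏ m, f m (x m)) = _
    rw [← Equiv.prod_comp finSumFinEquiv (fun m => f m (x m)), Fintype.prod_sum_type]
    simp
  have hGc : Continuous G := by
    apply continuous_finset_prod
    intro m _
    exact (hf m).comp (continuous_apply m)
  set D : Set (Fin (p + q) → ℝ) := E ⁻¹' ((orderedSimplex 0 1 p) ×ˢ (orderedSimplex 0 1 q))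
    with hD
  have hDmem : ∀ x : Fin (p + q) → ℝ, x ∈ D ↔
      ((fun i => x (Fin.castAdd q i)) ∈ orderedSimplex 0 1 p ∧
       (fun j => x (Fin.natAdd p j)) ∈ orderedSimplex 0 1 q) := by
    intro x
    rw [hD, Set.mem_preimage, hEapp x, Set.mem_prod]
  -- step 1 : LHS = ∫ over D
  have step1 : (∫ s in orderedSimplex 0 1 p, ∏ i, f (Fin.castAdd q i) (s i)) *
      (∫ t in orderedSimplex 0 1 q, ∏ j, f (Fin.natAdd p j) (t j)) =
      ∫ x in D, G x := by
    rw [← setIntegral_prod_mul (μ := volume) (ν := volume)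
      (fun s => ∏ i, f (Fin.castAdd q i) (s i)) (fun t => ∏ j, f (Fin.natAdd p j) (t j))
      (orderedSimplex 0 1 p) (orderedSimplex 0 1 q)]
    rw [hD, ← Measure.volume_eq_prod]
    rw [← hEmp.setIntegral_preimage_emb E.measurableEmbedding
      (fun z => (∏ i, f (Fin.castAdd q i) (z.1 i)) * (∏ j, f (Fin.natAdd p j) (z.2 j))) _]
    apply setIntegral_congr_fun
      ((((isOpen_orderedSimplex 0 1 p).prod (isOpen_orderedSimplex 0 1 q)).measurableSet).preimage
        E.measurable)
    intro x _
    show (∏ i, f (Fin.castAdd q i) ((E x).1 i)) * (∏ j, f (Fin.natAdd p j) ((E x).2 j)) = G x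
    rw [hEapp x]
    exact (hGsplit x).symm
  rw [step1]
  -- the pieces of D indexed by subsets A
  set Dp : {A : Finset (Fin (p + q)) // A.card = p} → Set (Fin (p + q) → ℝ) :=
    fun A => {x | (fun m => x (sigmaA A.1 A.2 m)) ∈ orderedSimplex 0 1 (p + q)} with hDp
  have hDpMeas : ∀ A, MeasurableSet (Dp A) := by
    intro A
    have hc : Continuous (fun (x : Fin (p + q) → ℝ) => fun m => x (sigmaA A.1 A.2 m)) :=
      continuous_pi (fun m => continuous_apply _)
    exact (isOpen_orderedSimplex 0 1 (p + q)).measurableSet.preimage hc.measurable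
  have hsurj : ∀ (A : {A : Finset (Fin (p + q)) // A.card = p}),
      Function.Surjective (sigmaA A.1 A.2) := fun A => (sigmaA_bijective A.2).surjective
  -- each piece is contained in D
  have hpieceD : ∀ A, Dp A ⊆ D := by
    intro A x hx
    obtain ⟨hb, hmono⟩ := hx
    have hb' : ∀ m : Fin (p + q), 0 < x (sigmaA A.1 A.2 m) ∧ x (sigmaA A.1 A.2 m) < 1 := hb
    have hmono' : ∀ m m' : Fin (p + q), m < m' →
        x (sigmaA A.1 A.2 m) < x (sigmaA A.1 A.2 m') := hmono
    rw [hDmem]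
    refine ⟨⟨fun i => ?_, fun i j hij => ?_⟩, ⟨fun i => ?_, fun i j hij => ?_⟩⟩
    · obtain ⟨m, hm⟩ := hsurj A (Fin.castAdd q i)
      have h := hb' m
      rw [hm] at h
      exact h
    · obtain ⟨m, hm⟩ := hsurj A (Fin.castAdd q i)
      obtain ⟨m', hm'⟩ := hsurj A (Fin.castAdd q j)
      have hmA : m ∈ A.1 := (sigmaA_val_lt_iff A.2 m).mp (by rw [hm]; exact i.isLt)
      have hm'A : m' ∈ A.1 := (sigmaA_val_lt_iff A.2 m').mp (by rw [hm']; exact j.isLt)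
      have hmm : m < m' := by
        rcases lt_trichotomy m m' with h | h | h
        · exact h
        · exfalso; rw [h, hm'] at hm
          have h1 := congrArg Fin.val hm
          simp only [Fin.coe_castAdd] at h1
          have h2 : (i : ℕ) < (j : ℕ) := hij
          omega
        · exfalso
          have hlt := sigmaA_strictMono_mem A.2 hm'A hmA h
          rw [hm, hm'] at hlt
          have : (j : ℕ) < (i : ℕ) := hlt
          have : (i : ℕ) < (j : ℕ) := hij
          omega
      have h := hmono' m m' hmm
      rw [hm, hm'] at h
      exact h
    · obtain ⟨m, hm⟩ := hsurj A (Fin.natAdd p i)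
      have h := hb' m
      rw [hm] at h
      exact h
    · obtain ⟨m, hm⟩ := hsurj A (Fin.natAdd p i)
      obtain ⟨m', hm'⟩ := hsurj A (Fin.natAdd p j)
      have hmA : m ∉ A.1 := by
        intro hc
        have h1 := (sigmaA_val_lt_iff A.2 m).mpr hc
        rw [hm] at h1
        simp at h1
      have hm'A : m' ∉ A.1 := by
        intro hc
        have h1 := (sigmaA_val_lt_iff A.2 m').mpr hc
        rw [hm'] at h1
        simp at h1
      have hmm : m < m' := by
        rcases lt_trichotomy m m' with h | h | h
        · exact h
        · exfalso; rw [h, hm'] at hm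
          have h1 := congrArg Fin.val hm
          simp only [Fin.coe_natAdd] at h1
          have h2 : (i : ℕ) < (j : ℕ) := hij
          omega
        · exfalso
          have hlt := sigmaA_strictMono_compl A.2 hm'A hmA h
          rw [hm, hm'] at hlt
          have h1 : p + (j : ℕ) < p + (i : ℕ) := hlt
          have h2 : (i : ℕ) < (j : ℕ) := hij
          omega
      have h := hmono' m m' hmm
      rw [hm, hm'] at h
      exact h
  -- the pieces are pairwise disjoint
  have hdisj : Pairwise (Function.onFun Disjoint Dp) := by
    intro A B hne
    rw [Function.onFun, Set.disjoint_left]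
    intro x hxA hxB
    apply hne
    have hsmA : StrictMono (fun m => x (sigmaA A.1 A.2 m)) := fun m m' h => hxA.2 m m' h
    have hsmB : StrictMono (fun m => x (sigmaA B.1 B.2 m)) := fun m m' h => hxB.2 m m' h
    have hxinj : Function.Injective x := by
      intro k k' hkk
      obtain ⟨m, hm⟩ := hsurj A k
      obtain ⟨m', hm'⟩ := hsurj A k'
      rw [← hm, ← hm'] at hkk ⊢
      rw [hsmA.injective hkk]
    have hrangeA : Set.range (fun m => x (sigmaA A.1 A.2 m)) = Set.range x := by
      show Set.range (x ∘ sigmaA A.1 A.2) = Set.range x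
      rw [Set.range_comp x (sigmaA A.1 A.2), (hsurj A).range_eq, Set.image_univ]
    have hrangeB : Set.range (fun m => x (sigmaA B.1 B.2 m)) = Set.range x := by
      show Set.range (x ∘ sigmaA B.1 B.2) = Set.range x
      rw [Set.range_comp x (sigmaA B.1 B.2), (hsurj B).range_eq, Set.image_univ]
    have heq := strictMono_unique hsmA hsmB (hrangeA.trans hrangeB.symm)
    have hσ : sigmaA A.1 A.2 = sigmaA B.1 B.2 := by
      funext m
      exact hxinj (congrFun heq m)
    exact Subtype.ext (sigmaA_eq_iff A.2 B.2 hσ)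
  -- a.e. covering of D by the pieces
  have hcover : D \ (⋃ A, Dp A) ⊆ {x : Fin (p + q) → ℝ | ¬ Function.Injective x} := by
    rintro x ⟨hxD, hxU⟩
    intro hinj
    apply hxU
    rw [hDmem] at hxD
    obtain ⟨⟨hb1, hm1⟩, ⟨hb2, hm2⟩⟩ := hxD
    have hb1' : ∀ i : Fin p, 0 < x (Fin.castAdd q i) ∧ x (Fin.castAdd q i) < 1 := hb1
    have hm1' : ∀ i j : Fin p, i < j → x (Fin.castAdd q i) < x (Fin.castAdd q j) := hm1
    have hb2' : ∀ j : Fin q, 0 < x (Fin.natAdd p j) ∧ x (Fin.natAdd p j) < 1 := hb2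
    have hm2' : ∀ i j : Fin q, i < j → x (Fin.natAdd p i) < x (Fin.natAdd p j) := hm2
    have hC : ∀ k k' : Fin (p + q), (k : ℕ) < p → (k' : ℕ) < p → k < k' → x k < x k' := by
      intro k k' hk hk' hkk
      have h := hm1' ⟨(k : ℕ), hk⟩ ⟨(k' : ℕ), hk'⟩ hkk
      have e1 : Fin.castAdd q ⟨(k : ℕ), hk⟩ = k := Fin.ext rfl
      have e2 : Fin.castAdd q ⟨(k' : ℕ), hk'⟩ = k' := Fin.ext rfl
      rw [e1, e2] at h
      exact h
    have hCc : ∀ k k' : Fin (p + q), p ≤ (k : ℕ) → p ≤ (k' : ℕ) → k < k' → x k < x k' := by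
      intro k k' hk hk' hkk
      have hkv : (k : ℕ) - p < q := by have := k.isLt; omega
      have hkv' : (k' : ℕ) - p < q := by have := k'.isLt; omega
      have hlt : (⟨(k : ℕ) - p, hkv⟩ : Fin q) < ⟨(k' : ℕ) - p, hkv'⟩ := by
        have : (k : ℕ) < (k' : ℕ) := hkk
        show (k : ℕ) - p < (k' : ℕ) - p
        omega
      have h := hm2' ⟨(k : ℕ) - p, hkv⟩ ⟨(k' : ℕ) - p, hkv'⟩ hlt
      have e1 : Fin.natAdd p ⟨(k : ℕ) - p, hkv⟩ = k := Fin.ext (by show p + ((k : ℕ) - p) = k; omega)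
      have e2 : Fin.natAdd p ⟨(k' : ℕ) - p, hkv'⟩ = k' := Fin.ext (by show p + ((k' : ℕ) - p) = k'; omega)
      rw [e1, e2] at h
      exact h
    obtain ⟨A, hA, hsm⟩ := exists_sigmaA hinj hC hCc
    refine Set.mem_iUnion.mpr ⟨⟨A, hA⟩, ?_⟩
    refine ⟨fun m => ?_, fun m m' h => hsm h⟩
    by_cases hk : ((sigmaA A hA m : Fin (p + q)) : ℕ) < p
    · have h := hb1' ⟨((sigmaA A hA m : Fin (p + q)) : ℕ), hk⟩
      have e1 : Fin.castAdd q ⟨((sigmaA A hA m : Fin (p + q)) : ℕ), hk⟩ = sigmaA A hA m :=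
        Fin.ext rfl
      rw [e1] at h
      exact h
    · have hkv : ((sigmaA A hA m : Fin (p + q)) : ℕ) - p < q := by
        have := (sigmaA A hA m).isLt; omega
      have h := hb2' ⟨((sigmaA A hA m : Fin (p + q)) : ℕ) - p, hkv⟩
      have e1 : Fin.natAdd p ⟨((sigmaA A hA m : Fin (p + q)) : ℕ) - p, hkv⟩ = sigmaA A hA m :=
        Fin.ext (by show p + (((sigmaA A hA m : Fin (p + q)) : ℕ) - p) = _; omega)
      rw [e1] at h
      exact h
  -- integrability
  have hIntD : IntegrableOn G D := by
    have hsubIcc : D ⊆ Set.Icc (0 : Fin (p + q) → ℝ) 1 := by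
      intro x hx
      rw [hDmem] at hx
      obtain ⟨⟨hb1, _⟩, ⟨hb2, _⟩⟩ := hx
      have hb1' : ∀ i : Fin p, 0 < x (Fin.castAdd q i) ∧ x (Fin.castAdd q i) < 1 := hb1
      have hb2' : ∀ j : Fin q, 0 < x (Fin.natAdd p j) ∧ x (Fin.natAdd p j) < 1 := hb2
      rw [Set.mem_Icc]
      constructor <;> rw [Pi.le_def] <;> intro k
      · by_cases hk : (k : ℕ) < p
        · have h := hb1' ⟨(k : ℕ), hk⟩
          have e1 : Fin.castAdd q ⟨(k : ℕ), hk⟩ = k := Fin.ext rfl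
          rw [e1] at h
          exact le_of_lt h.1
        · have hkv : (k : ℕ) - p < q := by have := k.isLt; omega
          have h := hb2' ⟨(k : ℕ) - p, hkv⟩
          have e1 : Fin.natAdd p ⟨(k : ℕ) - p, hkv⟩ = k :=
            Fin.ext (by show p + ((k : ℕ) - p) = k; omega)
          rw [e1] at h
          exact le_of_lt h.1
      · by_cases hk : (k : ℕ) < p
        · have h := hb1' ⟨(k : ℕ), hk⟩
          have e1 : Fin.castAdd q ⟨(k : ℕ), hk⟩ = k := Fin.ext rfl
          rw [e1] at h
          exact le_of_lt h.2
        · have hkv : (k : ℕ) - p < q := by have := k.isLt; omega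
          have h := hb2' ⟨(k : ℕ) - p, hkv⟩
          have e1 : Fin.natAdd p ⟨(k : ℕ) - p, hkv⟩ = k :=
            Fin.ext (by show p + ((k : ℕ) - p) = k; omega)
          rw [e1] at h
          exact le_of_lt h.2
    exact (hGc.continuousOn.integrableOn_compact isCompact_Icc).mono_set hsubIcc
  have hIntDp : ∀ A, IntegrableOn G (Dp A) := fun A => hIntD.mono_set (hpieceD A)
  -- decompose the integral
  have hDae : D =ᵐ[volume] ⋃ A, Dp A := by
    rw [ae_eq_set]
    constructor
    · exact measure_mono_null hcover (volume_nonInjective_null (p + q))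
    · have h : (⋃ A, Dp A) \ D = ∅ := Set.diff_eq_empty.mpr (Set.iUnion_subset hpieceD)
      rw [h]; exact measure_empty
  rw [setIntegral_congr_set hDae, integral_iUnion_fintype hDpMeas hdisj hIntDp]
  -- change of variables on each piece
  refine Finset.sum_congr rfl fun A _ => ?_
  set σe : Fin (p + q) ≃ Fin (p + q) := Equiv.ofBijective _ (sigmaA_bijective A.2) with hσe
  set Φ : (Fin (p + q) → ℝ) ≃ᵐ (Fin (p + q) → ℝ) :=
    MeasurableEquiv.piCongrLeft (fun _ => ℝ) σe.symm with hΦ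
  have hΦapp : ∀ (x : Fin (p + q) → ℝ) (m : Fin (p + q)), Φ x m = x (σe m) := by
    intro x m
    have h := MeasurableEquiv.piCongrLeft_apply_apply (σe.symm) (β := fun _ => ℝ) x (σe m)
    simpa using h
  have hΦmp : MeasurePreserving Φ volume volume :=
    volume_measurePreserving_piCongrLeft (fun _ => ℝ) σe.symm
  have hpre : Dp A = Φ ⁻¹' (orderedSimplex 0 1 (p + q)) := by
    ext x
    simp only [Set.mem_preimage, hDp, Set.mem_setOf_eq]
    have h : (fun m => x (sigmaA A.1 A.2 m)) = Φ x := by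
      funext m
      rw [hΦapp]
      rfl
    rw [h]
  rw [hpre, ← hΦmp.setIntegral_preimage_emb Φ.measurableEmbedding
    (fun u => ∏ m, f (sigmaA A.1 A.2 m) (u m)) _]
  apply setIntegral_congr_fun
    ((isOpen_orderedSimplex 0 1 (p + q)).measurableSet.preimage Φ.measurable)
  intro x _
  have h1 : ∀ m, f (sigmaA A.1 A.2 m) (Φ x m) = f (σe m) (x (σe m)) := by
    intro m
    rw [hΦapp]
    rfl
  have h2 : (∏ m, f (sigmaA A.1 A.2 m) (Φ x m)) = G x := by
    rw [Finset.prod_congr rfl (fun m _ => h1 m), Equiv.prod_comp σe (fun k => f k (x k))]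
  exact h2.symm

/-- finite linear combinations of iterated integrals are closed under
pointwise multiplication, with the product given explicitly by the shuffle
(interleaving) formula:
`f(X)·g(X) = Σ_{I,J} v_I w_J Σ_{A ⊆ {1,…,p+q}, |A|=p} S^{(w_A)}(X)`. -/
theorem stmt_3 {d : ℕ} (hd : 1 ≤ d) (X : ℝ → Fin d → ℝ) (hX : ContDiff ℝ 1 X)
    (𝕀 𝕁 : Finset (List (Fin d))) (v w : List (Fin d) → ℝ) :
    (∑ I ∈ 𝕀, v I * sigL X I) * (∑ J ∈ 𝕁, w J * sigL X J) =
      ∑ I ∈ 𝕀, ∑ J ∈ 𝕁, v I * w J *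
        ∑ A : {A : Finset (Fin (I.length + J.length)) // A.card = I.length},
          sig X 0 1 (interleave I.get J.get A.1 A.2) := by
  rw [Finset.sum_mul_sum]
  refine Finset.sum_congr rfl fun I _ => Finset.sum_congr rfl fun J _ => ?_
  have key : sigL X I * sigL X J =
      ∑ A : {A : Finset (Fin (I.length + J.length)) // A.card = I.length},
        sig X 0 1 (interleave I.get J.get A.1 A.2) := by
    set p := I.length with hp
    set q := J.length with hq
    set f : Fin (p + q) → ℝ → ℝ :=
      fun k => deriv (fun u => X u (Sum.elim I.get J.get (finSumFinEquiv.symm k))) with hfdef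
    have hf : ∀ k, Continuous (f k) := by
      intro k
      exact ((contDiff_pi.mp hX) _).continuous_deriv le_rfl
    have h1 : sigL X I = ∫ s in orderedSimplex 0 1 p, ∏ i, f (Fin.castAdd q i) (s i) := by
      unfold sigL sig
      have h : (fun s : Fin p → ℝ => ∏ i, deriv (fun u => X u (I.get i)) (s i)) =
          fun s => ∏ i, f (Fin.castAdd q i) (s i) := by
        funext s
        refine Finset.prod_congr rfl fun i _ => ?_
        simp +zetaDelta only [hfdef, finSumFinEquiv_symm_apply_castAdd, Sum.elim_inl]
      rw [h]
    have h2 : sigL X J = ∫ t in orderedSimplex 0 1 q, ∏ j, f (Fin.natAdd p j) (t j) := by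
      unfold sigL sig
      have h : (fun t : Fin q → ℝ => ∏ j, deriv (fun u => X u (J.get j)) (t j)) =
          fun t => ∏ j, f (Fin.natAdd p j) (t j) := by
        funext t
        refine Finset.prod_congr rfl fun j _ => ?_
        simp +zetaDelta only [hfdef, finSumFinEquiv_symm_apply_natAdd, Sum.elim_inr]
      rw [h]
    rw [h1, h2, key_shuffle p q f hf]
    refine Finset.sum_congr rfl fun A _ => ?_
    have h3 : ∀ m, f (sigmaA A.1 A.2 m) =
        deriv (fun u => X u (interleave I.get J.get A.1 A.2 m)) := by
      intro m
      rw [hfdef]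
      by_cases hm : m ∈ A.1
      · simp +zetaDelta only [interleave, sigmaA, dif_pos hm, finSumFinEquiv_symm_apply_castAdd,
          Sum.elim_inl]
      · simp +zetaDelta only [interleave, sigmaA, dif_neg hm, finSumFinEquiv_symm_apply_natAdd,
          Sum.elim_inr]
    unfold sig
    have h : (fun u : Fin (p + q) → ℝ =>
        ∏ m, deriv (fun t => X t (interleave I.get J.get A.1 A.2 m)) (u m)) =
        fun u => ∏ m, f (sigmaA A.1 A.2 m) (u m) := by
      funext u
      refine Finset.prod_congr rfl fun m _ => ?_
      rw [h3 m]
    rw [h]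
  calc v I * sigL X I * (w J * sigL X J) = v I * w J * (sigL X I * sigL X J) := by ring
    _ = _ := by rw [key]
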